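/- arXiv:1704.05198 — 2 statements merged into one kernel-verified Lean document; each statement's English description precedes it below -/
import Mathlib

section
/- For every n ≥ 1 there exists a constant C = C(n) > 0 such that for every θ with 0 < θ ≤ 1/2 and every real n×n matrix A with det A ≥ θ, one has (θ/C) (1/|A^{−1}|) |1 − 1/det A| ≤ dist(A, SL(n)) ≤ C (1/|A^{−1}|) |1 − 1/det A|, where |·| is the Frobenius norm. -/
open Matrix

noncomputable section

/-- Frobenius norm of a real square matrix. -/
def frob {ι : Type*} [Fintype ι] (A : Matrix ι ι ℝ) : ℝ :=
  Real.sqrt (∑ i, ∑ j, (A i j) ^ 2)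

/-- Frobenius distance from a matrix to `SL(n)`. -/
def distSL {n : ℕ} (A : Matrix (Fin n) (Fin n) ℝ) : ℝ :=
  sInf {r : ℝ | ∃ B : Matrix (Fin n) (Fin n) ℝ, B.det = 1 ∧ r = frob (A - B)}

attribute [local instance] Matrix.frobeniusSeminormedAddCommGroup

lemma frob_eq_norm {n : ℕ} (A : Matrix (Fin n) (Fin n) ℝ) : frob A = ‖A‖ := by
  rw [Matrix.frobenius_norm_def, frob, ← Real.sqrt_eq_rpow]
  congr 1
  apply Finset.sum_congr rfl; intro i _
  apply Finset.sum_congr rfl; intro j _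
  rw [Real.norm_eq_abs, show ((2:ℝ)) = ((2:ℕ):ℝ) by norm_num, Real.rpow_natCast, sq_abs]

lemma frob_nonneg {n : ℕ} (A : Matrix (Fin n) (Fin n) ℝ) : 0 ≤ frob A :=
  Real.sqrt_nonneg _

lemma frob_mul_le {n : ℕ} (A B : Matrix (Fin n) (Fin n) ℝ) :
    frob (A * B) ≤ frob A * frob B := by
  simp only [frob_eq_norm]; exact Matrix.frobenius_norm_mul A B

lemma entry_le_frob {n : ℕ} (A : Matrix (Fin n) (Fin n) ℝ) (i j : Fin n) :
    |A i j| ≤ frob A := by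
  rw [frob, ← Real.sqrt_sq_eq_abs]
  apply Real.sqrt_le_sqrt
  calc A i j ^ 2 ≤ ∑ j', A i j' ^ 2 :=
        Finset.single_le_sum (f := fun j' => A i j' ^ 2) (fun _ _ => sq_nonneg _)
          (Finset.mem_univ j)
    _ ≤ ∑ i', ∑ j', A i' j' ^ 2 :=
        Finset.single_le_sum (f := fun i' => ∑ j', A i' j' ^ 2)
          (fun _ _ => Finset.sum_nonneg fun _ _ => sq_nonneg _) (Finset.mem_univ i)

lemma frob_pos_of_ne_zero {n : ℕ} {A : Matrix (Fin n) (Fin n) ℝ} (h : A ≠ 0) :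
    0 < frob A := by
  obtain ⟨i, j, hij⟩ : ∃ i j, A i j ≠ 0 := by
    by_contra hc
    push_neg at hc
    exact h (by ext i j; simp [hc])
  exact lt_of_lt_of_le (abs_pos.2 hij) (entry_le_frob A i j)

lemma exists_big_entry {n : ℕ} (hn : 1 ≤ n) (A : Matrix (Fin n) (Fin n) ℝ) :
    ∃ i j, frob A ≤ n * |A i j| := by
  have hne : (Finset.univ : Finset (Fin n × Fin n)).Nonempty :=
    ⟨(⟨0, hn⟩, ⟨0, hn⟩), Finset.mem_univ _⟩
  obtain ⟨⟨i, j⟩, -, hmax⟩ := Finset.exists_max_image Finset.univ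
    (fun p : Fin n × Fin n => |A p.1 p.2|) hne
  refine ⟨i, j, ?_⟩
  have h1 : frob A ≤ Real.sqrt ((n:ℝ)^2 * |A i j|^2) := by
    apply Real.sqrt_le_sqrt
    calc ∑ i', ∑ j', A i' j' ^ 2 ≤ ∑ i' : Fin n, ∑ j' : Fin n, |A i j| ^ 2 := by
          apply Finset.sum_le_sum; intro a _; apply Finset.sum_le_sum; intro b _
          rw [← sq_abs (A a b)]
          exact pow_le_pow_left₀ (abs_nonneg _) (hmax (a, b) (Finset.mem_univ _)) 2
      _ = (n:ℝ)^2 * |A i j|^2 := by simp [Finset.sum_const, mul_pow]; ring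
  rw [Real.sqrt_mul (sq_nonneg _), Real.sqrt_sq (by positivity), Real.sqrt_sq_eq_abs,
    abs_abs] at h1
  exact h1

/-- Euclidean norm of a row vector. -/
def rowNormV {n : ℕ} (v : Fin n → ℝ) : ℝ := Real.sqrt (∑ j, v j ^ 2)

lemma rowNormV_nonneg {n : ℕ} (v : Fin n → ℝ) : 0 ≤ rowNormV v := Real.sqrt_nonneg _

lemma abs_le_rowNormV {n : ℕ} (v : Fin n → ℝ) (j : Fin n) : |v j| ≤ rowNormV v := by
  rw [rowNormV, ← Real.sqrt_sq_eq_abs]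
  exact Real.sqrt_le_sqrt (Finset.single_le_sum (f := fun j' => v j' ^ 2)
    (fun _ _ => sq_nonneg _) (Finset.mem_univ j))

lemma rowNormV_add {n : ℕ} (u v : Fin n → ℝ) :
    rowNormV (u + v) ≤ rowNormV u + rowNormV v := by
  have h : ∀ w : Fin n → ℝ, rowNormV w = ‖(WithLp.equiv 2 (Fin n → ℝ)).symm w‖ := by
    intro w
    rw [EuclideanSpace.norm_eq, rowNormV]
    congr 1
    apply Finset.sum_congr rfl
    intro j _
    rw [show ((WithLp.equiv 2 (Fin n → ℝ)).symm w) j = w j from rfl, Real.norm_eq_abs, sq_abs]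
  rw [h, h, h]
  have : (WithLp.equiv 2 (Fin n → ℝ)).symm (u + v)
      = (WithLp.equiv 2 (Fin n → ℝ)).symm u + (WithLp.equiv 2 (Fin n → ℝ)).symm v := rfl
  rw [this]
  exact norm_add_le _ _
lemma rowNormV_le_frob {n : ℕ} (A : Matrix (Fin n) (Fin n) ℝ) (i : Fin n) :
    rowNormV (A i) ≤ frob A := by
  apply Real.sqrt_le_sqrt
  exact Finset.single_le_sum (f := fun i' => ∑ j', A i' j' ^ 2)
    (fun _ _ => Finset.sum_nonneg fun _ _ => sq_nonneg _) (Finset.mem_univ i)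

lemma rowNormV_one {n : ℕ} (i : Fin n) : rowNormV ((1 : Matrix (Fin n) (Fin n) ℝ) i) = 1 := by
  rw [rowNormV]
  have : ∀ j, ((1 : Matrix (Fin n) (Fin n) ℝ) i j) ^ 2 = if j = i then 1 else 0 := by
    intro j
    by_cases h : j = i <;> simp [Matrix.one_apply, h, eq_comm] <;> simp [Ne.symm h]
  simp only [this, Finset.sum_ite_eq', Finset.mem_univ, if_true, Real.sqrt_one]

/-- Leibniz-type bound for determinants. -/
lemma abs_det_le_prod {n : ℕ} (X : Matrix (Fin n) (Fin n) ℝ) :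
    |X.det| ≤ (n.factorial : ℝ) * ∏ i, rowNormV (X i) := by
  rw [Matrix.det_apply]
  calc |∑ σ : Equiv.Perm (Fin n), (Equiv.Perm.sign σ : ℤ) • ∏ i, X (σ i) i|
      ≤ ∑ σ : Equiv.Perm (Fin n), |(Equiv.Perm.sign σ : ℤ) • ∏ i, X (σ i) i| :=
        Finset.abs_sum_le_sum_abs _ _
    _ ≤ ∑ _σ : Equiv.Perm (Fin n), ∏ i, rowNormV (X i) := by
        apply Finset.sum_le_sum
        intro σ _
        rw [zsmul_eq_mul, abs_mul]
        have hs : |((Equiv.Perm.sign σ : ℤ) : ℝ)| = 1 := by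
          rcases Int.units_eq_one_or (Equiv.Perm.sign σ) with h | h <;> simp [h]
        rw [hs, one_mul, Finset.abs_prod]
        calc ∏ i, |X (σ i) i| ≤ ∏ i, rowNormV (X (σ i)) :=
              Finset.prod_le_prod (fun _ _ => abs_nonneg _)
                (fun i _ => abs_le_rowNormV (X (σ i)) i)
          _ = ∏ i, rowNormV (X i) := Equiv.prod_comp σ (fun i => rowNormV (X i))
    _ = (n.factorial : ℝ) * ∏ i, rowNormV (X i) := by
        rw [Finset.sum_const, Finset.card_univ, Fintype.card_perm, nsmul_eq_mul, Fintype.card_fin]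

lemma det_one_add_near {n : ℕ} (P : Matrix (Fin n) (Fin n) ℝ) (hP : frob P ≤ 1/2) :
    |(1 + P).det - 1| ≤ (n : ℝ) * n.factorial * 2^n * frob P := by
  classical
  -- interpolating matrices
  set Y : Matrix (Fin n) (Fin n) ℝ := 1 + P with hY
  set g : ℕ → Matrix (Fin n) (Fin n) ℝ :=
    fun k => Matrix.of (fun i j => if (i : ℕ) < k then Y i j else (1 : Matrix (Fin n) (Fin n) ℝ) i j)
    with hg
  have hg0 : g 0 = 1 := by ext i j; simp [hg]
  have hgn : g n = Y := by ext i j; simp [hg, i.isLt]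
  have htel : Y.det - 1 = ∑ k ∈ Finset.range n, ((g (k+1)).det - (g k).det) := by
    rw [Finset.sum_range_sub (fun k => (g k).det), hg0, hgn, Matrix.det_one]
  -- bound each term
  have hterm : ∀ k ∈ Finset.range n,
      |(g (k+1)).det - (g k).det| ≤ (n.factorial : ℝ) * 2^n * frob P := by
    intro k hk
    rw [Finset.mem_range] at hk
    set k' : Fin n := ⟨k, hk⟩ with hk'
    have h1 : g (k+1) = updateRow (g k) k' (Y k') := by
      ext i j
      rcases eq_or_ne i k' with rfl | hik
      · simp [updateRow_apply, hg, hk']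
      · have hik' : (i : ℕ) ≠ k := fun h => hik (Fin.ext h)
        simp only [updateRow_apply, if_neg hik, hg, Matrix.of_apply]
        congr 1
        simp only [eq_iff_iff]
        omega
    have h2 : g k = updateRow (g k) k' ((1 : Matrix (Fin n) (Fin n) ℝ) k') := by
      ext i j
      rcases eq_or_ne i k' with rfl | hik
      · simp [updateRow_apply, hg, hk']; rfl
      · simp [updateRow_apply, hik]
    have h3 : (g (k+1)).det - (g k).det
        = (updateRow (g k) k' (fun j => P k' j)).det := by
      have hd : (Y k' : Fin n → ℝ) = (fun j => P k' j) + (1 : Matrix (Fin n) (Fin n) ℝ) k' := by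
        funext j; simp [hY, Matrix.add_apply]; ring
      rw [h1, hd, det_updateRow_add, ← h2]
      ring
    rw [h3]
    refine le_trans (abs_det_le_prod _) ?_
    -- product of row norms
    have hrow : ∀ i, rowNormV ((updateRow (g k) k' (fun j => P k' j)) i)
        ≤ if i = k' then frob P else 2 := by
      intro i
      rcases eq_or_ne i k' with rfl | hik
      · simp only [updateRow_self, if_pos rfl]
        exact rowNormV_le_frob P k'
      · rw [updateRow_ne hik, if_neg hik]
        simp only [hg, Matrix.of_apply]
        by_cases hlt : (i : ℕ) < k
        · have : (g k) i = (1 : Matrix (Fin n) (Fin n) ℝ) i + P i := by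
            funext j; simp [hg, hlt, hY, Matrix.add_apply]
          rw [show ((Matrix.of fun i j => if (i:ℕ) < k then Y i j
                else (1 : Matrix (Fin n) (Fin n) ℝ) i j) : Matrix (Fin n) (Fin n) ℝ) i
              = (1 : Matrix (Fin n) (Fin n) ℝ) i + P i from this]
          refine le_trans (rowNormV_add _ _) ?_
          rw [rowNormV_one]
          have := le_trans (rowNormV_le_frob P i) hP
          linarith
        · have : ((Matrix.of fun i j => if (i:ℕ) < k then Y i j
                else (1 : Matrix (Fin n) (Fin n) ℝ) i j) : Matrix (Fin n) (Fin n) ℝ) i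
              = (1 : Matrix (Fin n) (Fin n) ℝ) i := by
            funext j; simp [hlt]
          rw [this, rowNormV_one]; norm_num
    calc (n.factorial : ℝ) * ∏ i, rowNormV ((updateRow (g k) k' (fun j => P k' j)) i)
        ≤ (n.factorial : ℝ) * ∏ i, (if i = k' then frob P else 2 : ℝ) := by
          apply mul_le_mul_of_nonneg_left _ (by positivity)
          exact Finset.prod_le_prod (fun i _ => rowNormV_nonneg _) (fun i _ => hrow i)
      _ ≤ (n.factorial : ℝ) * 2^n * frob P := by
          rw [← Finset.mul_prod_erase Finset.univ _ (Finset.mem_univ k'), if_pos rfl]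
          have h4 : ∏ i ∈ Finset.univ.erase k', (if i = k' then frob P else 2 : ℝ)
              = 2 ^ (Finset.univ.erase k').card := by
            rw [Finset.prod_congr rfl (fun i hi => if_neg (Finset.ne_of_mem_erase hi)),
              Finset.prod_const]
          rw [h4]
          have h5 : (2:ℝ) ^ (Finset.univ.erase k').card ≤ 2^n := by
            apply pow_le_pow_right₀ (by norm_num)
            exact le_trans (Finset.card_erase_le) (by simp)
          have h6 : frob P * 2 ^ (Finset.univ.erase k').card ≤ 2^n * frob P := by
            calc frob P * 2 ^ (Finset.univ.erase k').card ≤ frob P * 2^n :=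
                  mul_le_mul_of_nonneg_left h5 (frob_nonneg P)
              _ = 2^n * frob P := by ring
          calc (n.factorial : ℝ) * (frob P * 2 ^ (Finset.univ.erase k').card)
              ≤ (n.factorial : ℝ) * (2^n * frob P) :=
                mul_le_mul_of_nonneg_left h6 (by positivity)
            _ = (n.factorial : ℝ) * 2^n * frob P := by ring
  calc |Y.det - 1| = |∑ k ∈ Finset.range n, ((g (k+1)).det - (g k).det)| := by
        rw [← htel]
    _ ≤ ∑ k ∈ Finset.range n, |(g (k+1)).det - (g k).det| := Finset.abs_sum_le_sum_abs _ _
    _ ≤ ∑ _k ∈ Finset.range n, (n.factorial : ℝ) * 2^n * frob P := Finset.sum_le_sum hterm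
    _ = (n : ℝ) * n.factorial * 2^n * frob P := by
        rw [Finset.sum_const, Finset.card_range, nsmul_eq_mul]; ring

lemma frob_neg {n : ℕ} (A : Matrix (Fin n) (Fin n) ℝ) : frob (-A) = frob A := by
  unfold frob; congr 1; apply Finset.sum_congr rfl; intros; apply Finset.sum_congr rfl; intros
  simp

/-- the constant -/
def Cn (n : ℕ) : ℝ := (n : ℝ) * n.factorial * 2^n + n + 2

lemma Cn_pos (n : ℕ) : 0 < Cn n := by unfold Cn; positivity

lemma Kn_pos {n : ℕ} (hn : 1 ≤ n) : 0 < (n : ℝ) * n.factorial * 2^n := by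
  have : (0:ℝ) < n := by exact_mod_cast hn
  positivity

lemma inv_ne_zero' {n : ℕ} (hn : 1 ≤ n) {A : Matrix (Fin n) (Fin n) ℝ} (hA : A.det ≠ 0) :
    0 < frob A⁻¹ := by
  apply frob_pos_of_ne_zero
  intro h0
  have h1 : A⁻¹ * A = 1 := Matrix.nonsing_inv_mul A (isUnit_iff_ne_zero.2 hA)
  rw [h0, Matrix.zero_mul] at h1
  have : ((0 : Matrix (Fin n) (Fin n) ℝ)) ⟨0, hn⟩ ⟨0, hn⟩
      = (1 : Matrix (Fin n) (Fin n) ℝ) ⟨0, hn⟩ ⟨0, hn⟩ := by rw [h1]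
  simp [Matrix.one_apply] at this

lemma theta_abs_le {θ d : ℝ} (hθ0 : 0 < θ) (hθ : θ ≤ 1/2) (hd : θ ≤ d) :
    θ * |1 - d⁻¹| ≤ 1 := by
  have hd0 : 0 < d := lt_of_lt_of_le hθ0 hd
  have h1 : d⁻¹ ≤ θ⁻¹ := by
    apply inv_anti₀ hθ0 hd
  have h2 : |1 - d⁻¹| ≤ θ⁻¹ := by
    rw [abs_sub_le_iff]
    constructor
    · have : 0 < d⁻¹ := by positivity
      have hθ1 : 1 ≤ θ⁻¹ := by
        rw [le_inv_comm₀] <;> linarith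
      linarith
    · have : (0:ℝ) ≤ 1 := by norm_num
      linarith
  calc θ * |1 - d⁻¹| ≤ θ * θ⁻¹ := mul_le_mul_of_nonneg_left h2 (le_of_lt hθ0)
    _ = 1 := mul_inv_cancel₀ (ne_of_gt hθ0)

/-- lower bound for each B in SL(n) -/
lemma lower_bound {n : ℕ} (hn : 1 ≤ n) (θ : ℝ) (hθ0 : 0 < θ) (hθ : θ ≤ 1/2)
    (A B : Matrix (Fin n) (Fin n) ℝ) (hA : θ ≤ A.det) (hB : B.det = 1) :
    (θ / Cn n) * ((frob A⁻¹)⁻¹ * |1 - (A.det)⁻¹|) ≤ frob (A - B) := by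
  set d := A.det with hd
  have hd0 : 0 < d := lt_of_lt_of_le hθ0 hA
  have hdu : IsUnit A.det := isUnit_iff_ne_zero.2 (ne_of_gt hd0)
  have hfi : 0 < frob A⁻¹ := inv_ne_zero' hn (ne_of_gt hd0)
  set δ := frob (A - B) with hδ
  have hδ0 : 0 ≤ δ := frob_nonneg _
  have hC : 0 < Cn n := Cn_pos n
  have hK : 0 < (n : ℝ) * n.factorial * 2^n := Kn_pos hn
  have hCK : (n : ℝ) * n.factorial * 2^n ≤ Cn n := by
    have h0 : (0:ℝ) ≤ (n:ℝ) := by positivity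
    unfold Cn; linarith
  have hθ1 : θ * |1 - d⁻¹| ≤ 1 := theta_abs_le hθ0 hθ hA
  by_cases hcase : frob A⁻¹ * δ ≤ 1/2
  · -- main case
    set P := A⁻¹ * (B - A) with hP
    have hPf : frob P ≤ frob A⁻¹ * δ := by
      calc frob P ≤ frob A⁻¹ * frob (B - A) := frob_mul_le _ _
        _ = frob A⁻¹ * δ := by rw [show B - A = -(A - B) from (neg_sub A B).symm, frob_neg]
    have hPhalf : frob P ≤ 1/2 := le_trans hPf hcase
    have hfac : A * (1 + P) = B := by
      rw [Matrix.mul_add, hP, ← Matrix.mul_assoc, Matrix.mul_nonsing_inv A hdu,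
        Matrix.mul_one, Matrix.one_mul]
      abel
    have hdet : d * (1 + P).det = 1 := by
      rw [← Matrix.det_mul, hfac, hB]
    have hdP : (1 + P).det = d⁻¹ := by
      field_simp at hdet ⊢
      linarith
    have hkey : |1 - d⁻¹| ≤ ((n : ℝ) * n.factorial * 2^n) * (frob A⁻¹ * δ) := by
      calc |1 - d⁻¹| = |(1 + P).det - 1| := by rw [hdP, abs_sub_comm]
        _ ≤ ((n : ℝ) * n.factorial * 2^n) * frob P := det_one_add_near P hPhalf
        _ ≤ ((n : ℝ) * n.factorial * 2^n) * (frob A⁻¹ * δ) :=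
            mul_le_mul_of_nonneg_left hPf (le_of_lt hK)
    -- conclude
    have h2 : (frob A⁻¹)⁻¹ * |1 - d⁻¹| ≤ ((n : ℝ) * n.factorial * 2^n) * δ := by
      rw [inv_mul_le_iff₀ hfi]
      calc |1 - d⁻¹| ≤ ((n : ℝ) * n.factorial * 2^n) * (frob A⁻¹ * δ) := hkey
        _ = frob A⁻¹ * (((n : ℝ) * n.factorial * 2^n) * δ) := by ring
    have h3 : θ / Cn n ≤ 1 / ((n : ℝ) * n.factorial * 2^n) := by
      rw [div_le_div_iff₀ hC hK]
      nlinarith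
    calc (θ / Cn n) * ((frob A⁻¹)⁻¹ * |1 - d⁻¹|)
        ≤ (1 / ((n : ℝ) * n.factorial * 2^n)) * ((frob A⁻¹)⁻¹ * |1 - d⁻¹|) :=
          mul_le_mul_of_nonneg_right h3 (by positivity)
      _ ≤ (1 / ((n : ℝ) * n.factorial * 2^n)) * (((n : ℝ) * n.factorial * 2^n) * δ) :=
          mul_le_mul_of_nonneg_left h2 (by positivity)
      _ = δ := by field_simp
  · -- easy case : δ is big
    push_neg at hcase
    have hδpos : 0 < δ := by
      by_contra h
      push_neg at h
      have : δ = 0 := le_antisymm h hδ0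
      rw [this, mul_zero] at hcase
      linarith
    have hfinv : (frob A⁻¹)⁻¹ ≤ 2 * δ := by
      rw [inv_le_iff_one_le_mul₀ hfi]
      nlinarith
    calc (θ / Cn n) * ((frob A⁻¹)⁻¹ * |1 - d⁻¹|) 
        = (1 / Cn n) * (θ * |1 - d⁻¹|) * (frob A⁻¹)⁻¹ := by ring
      _ ≤ (1 / Cn n) * 1 * (2 * δ) := by
          apply mul_le_mul
          · apply mul_le_mul_of_nonneg_left hθ1 (by positivity)
          · exact hfinv
          · positivity
          · positivity
      _ ≤ δ := by
          have hC2 : 2 ≤ Cn n := by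
            have h0 : (0:ℝ) ≤ (n:ℝ) := by positivity
            unfold Cn; nlinarith
          rw [one_div, mul_one]
          rw [inv_mul_le_iff₀ hC]
          nlinarith

/-- upper bound: a good element of SL(n) near A -/
lemma upper_elt {n : ℕ} (hn : 1 ≤ n) (A : Matrix (Fin n) (Fin n) ℝ) (hA : 0 < A.det) :
    ∃ B : Matrix (Fin n) (Fin n) ℝ, B.det = 1 ∧
      frob (A - B) ≤ n * ((frob A⁻¹)⁻¹ * |1 - (A.det)⁻¹|) := by
  classical
  set d := A.det with hd
  have hd0 : d ≠ 0 := ne_of_gt hA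
  have hfi : 0 < frob A⁻¹ := inv_ne_zero' hn hd0
  obtain ⟨k, l, hkl⟩ := exists_big_entry hn A⁻¹
  have hent : 0 < |A⁻¹ k l| := by
    have hn0 : (0:ℝ) < n := by exact_mod_cast hn
    by_contra h
    push_neg at h
    have : |A⁻¹ k l| = 0 := le_antisymm h (abs_nonneg _)
    rw [this, mul_zero] at hkl
    linarith
  have hent0 : A⁻¹ k l ≠ 0 := fun h => by simp [h] at hent
  set t : ℝ := (1 - d) / (d * A⁻¹ k l) with ht
  set B : Matrix (Fin n) (Fin n) ℝ := updateRow A l (A l + t • (Pi.single k 1 : Fin n → ℝ)) with hB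
  have hadj : adjugate A k l = d * A⁻¹ k l := by
    have h1 : A⁻¹ = Ring.inverse A.det • A.adjugate := Matrix.inv_def A
    have h2 : A⁻¹ k l = d⁻¹ * adjugate A k l := by
      rw [h1, Ring.inverse_eq_inv]
      simp [Matrix.smul_apply, hd]
    rw [h2]
    field_simp
  have hdetB : B.det = 1 := by
    rw [hB, det_updateRow_add, Matrix.updateRow_eq_self, det_updateRow_smul,
      ← Matrix.adjugate_apply, hadj, ht]
    have hne : d * A⁻¹ k l ≠ 0 := mul_ne_zero hd0 hent0
    rw [div_mul_cancel₀ _ hne]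
    simp [hd]
  refine ⟨B, hdetB, ?_⟩
  have hfrobAB : frob (A - B) = |t| := by
    have hentries : ∀ i j, (A - B) i j = if i = l then (if j = k then -t else 0) else 0 := by
      intro i j
      rcases eq_or_ne i l with rfl | hil
      · simp only [Matrix.sub_apply, hB, updateRow_self, if_pos rfl, Pi.add_apply,
          Pi.smul_apply, Pi.single_apply, smul_eq_mul]
        rcases eq_or_ne j k with rfl | hjk
        · simp
        · simp [hjk]
      · simp [Matrix.sub_apply, hB, updateRow_ne hil, hil]
    rw [frob]
    have hsum : ∑ i, ∑ j, ((A - B) i j)^2 = t^2 := by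
      have : ∀ i, ∑ j, ((A - B) i j)^2 = if i = l then t^2 else 0 := by
        intro i
        rcases eq_or_ne i l with rfl | hil
        · rw [if_pos rfl]
          have : ∀ j, ((A - B) i j)^2 = if j = k then t^2 else 0 := by
            intro j
            rw [hentries i j, if_pos rfl]
            rcases eq_or_ne j k with rfl | hjk
            · simp
            · simp [hjk]
          rw [Finset.sum_congr rfl (fun j _ => this j), Finset.sum_ite_eq',
            if_pos (Finset.mem_univ k)]
        · rw [if_neg hil]
          apply Finset.sum_eq_zero
          intro j _
          rw [hentries i j, if_neg hil]
          norm_num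
      rw [Finset.sum_congr rfl (fun i _ => this i), Finset.sum_ite_eq',
        if_pos (Finset.mem_univ l)]
    rw [hsum, Real.sqrt_sq_eq_abs]
  rw [hfrobAB]
  have habs : |1 - d⁻¹| = |1 - d| / d := by
    rw [show (1 : ℝ) - d⁻¹ = (d - 1) / d by field_simp, abs_div, abs_of_pos hA,
      abs_sub_comm]
  have htabs : |t| = |1 - d| / (d * |A⁻¹ k l|) := by
    rw [ht, abs_div, abs_mul, abs_of_pos hA]
  rw [htabs, habs]
  rw [div_le_iff₀ (by positivity)]
  have hdd : d * d⁻¹ = 1 := mul_inv_cancel₀ hd0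
  have hstep : (n : ℝ) * ((frob A⁻¹)⁻¹ * (|1 - d| / d)) * (d * |A⁻¹ k l|)
      = |1 - d| * (((n:ℝ) * |A⁻¹ k l|) * (frob A⁻¹)⁻¹) := by
    rw [div_eq_mul_inv]
    linear_combination ((n:ℝ) * |1 - d| * |A⁻¹ k l| * (frob A⁻¹)⁻¹) * hdd
  rw [hstep]
  have h1 : (1:ℝ) ≤ ((n:ℝ) * |A⁻¹ k l|) * (frob A⁻¹)⁻¹ := by
    rw [← div_eq_mul_inv, le_div_iff₀ hfi, one_mul]
    exact hkl
  nlinarith [abs_nonneg (1 - d)]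

theorem stmt_10 (n : ℕ) (hn : 1 ≤ n) :
    ∃ C : ℝ, 0 < C ∧
      ∀ θ : ℝ, 0 < θ → θ ≤ 1 / 2 →
        ∀ A : Matrix (Fin n) (Fin n) ℝ, θ ≤ A.det →
          (θ / C) * ((frob A⁻¹)⁻¹ * |1 - (A.det)⁻¹|) ≤ distSL A ∧
          distSL A ≤ C * ((frob A⁻¹)⁻¹ * |1 - (A.det)⁻¹|) := by
  refine ⟨Cn n, Cn_pos n, ?_⟩
  intro θ hθ0 hθ A hA
  have hA0 : 0 < A.det := lt_of_lt_of_le hθ0 hA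
  obtain ⟨B₀, hB₀, hB₀le⟩ := upper_elt hn A hA0
  have hne : {r : ℝ | ∃ B : Matrix (Fin n) (Fin n) ℝ, B.det = 1 ∧ r = frob (A - B)}.Nonempty :=
    ⟨frob (A - B₀), B₀, hB₀, rfl⟩
  have hbdd : BddBelow {r : ℝ | ∃ B : Matrix (Fin n) (Fin n) ℝ, B.det = 1 ∧ r = frob (A - B)} :=
    ⟨0, fun r hr => by obtain ⟨B, -, rfl⟩ := hr; exact frob_nonneg _⟩
  constructor
  · apply le_csInf hne
    rintro r ⟨B, hB, rfl⟩
    exact lower_bound hn θ hθ0 hθ A B hA hB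
  · have h1 : distSL A ≤ frob (A - B₀) := csInf_le hbdd ⟨B₀, hB₀, rfl⟩
    have h2 : (n : ℝ) * ((frob A⁻¹)⁻¹ * |1 - (A.det)⁻¹|)
        ≤ Cn n * ((frob A⁻¹)⁻¹ * |1 - (A.det)⁻¹|) := by
      apply mul_le_mul_of_nonneg_right _
        (mul_nonneg (inv_nonneg.2 (frob_nonneg _)) (abs_nonneg _))
      have h0 : (0:ℝ) ≤ (n:ℝ) * n.factorial * 2^n := by positivity
      unfold Cn
      linarith
    exact le_trans h1 (le_trans hB₀le h2)

end
end

section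
/- For every n ≥ 1 and every 0 < λ ≤ Λ there exists a constant C_6 = C_6(n, λ, Λ) > 0 such that for every real n×n matrix A with λ ≤ det A ≤ Λ, one has |1 − det A| ≤ C_6 · K(A) · dist(A, SL(n)). -/
open Matrix Finset

noncomputable section

/-- The distortion `K(A) = |A|^n / det A` of a matrix (Frobenius norm). -/
def Kdist {n : ℕ} (A : Matrix (Fin n) (Fin n) ℝ) : ℝ :=
  frob A ^ n / A.det

lemma frob_nonneg_s11 {ι : Type*} [Fintype ι] (A : Matrix ι ι ℝ) : 0 ≤ frob A :=
  Real.sqrt_nonneg _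

lemma abs_entry_le_frob {ι : Type*} [Fintype ι] (A : Matrix ι ι ℝ) (i j : ι) :
    |A i j| ≤ frob A := by
  rw [← Real.sqrt_sq_eq_abs]
  apply Real.sqrt_le_sqrt
  calc (A i j) ^ 2 ≤ ∑ j', (A i j') ^ 2 :=
        Finset.single_le_sum (f := fun j' => (A i j') ^ 2) (fun _ _ => sq_nonneg _) (mem_univ j)
    _ ≤ ∑ i', ∑ j', (A i' j') ^ 2 :=
        Finset.single_le_sum (f := fun i' => ∑ j', (A i' j') ^ 2)
          (fun _ _ => Finset.sum_nonneg fun _ _ => sq_nonneg _) (mem_univ i)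

lemma prod_sub_prod_bound {ι : Type*} [DecidableEq ι] (s : Finset ι) (f g : ι → ℝ) (M t : ℝ)
    (hM : 1 ≤ M) (ht : 0 ≤ t) (hf : ∀ i ∈ s, |f i| ≤ M) (hg : ∀ i ∈ s, |g i| ≤ M)
    (hfg : ∀ i ∈ s, |f i - g i| ≤ t) :
    |∏ i ∈ s, f i - ∏ i ∈ s, g i| ≤ s.card * M ^ s.card * t := by
  induction s using Finset.induction_on with
  | empty => simp
  | insert a s ha ih =>
    have h0 : (0:ℝ) ≤ M := le_trans zero_le_one hM
    have hpg : |∏ i ∈ s, g i| ≤ M ^ s.card := by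
      rw [Finset.abs_prod]
      calc ∏ i ∈ s, |g i| ≤ ∏ _i ∈ s, M :=
            Finset.prod_le_prod (fun i _ => abs_nonneg _)
              (fun i hi => hg i (mem_insert_of_mem hi))
        _ = M ^ s.card := Finset.prod_const M
    have ihs := ih (fun i hi => hf i (mem_insert_of_mem hi))
      (fun i hi => hg i (mem_insert_of_mem hi)) (fun i hi => hfg i (mem_insert_of_mem hi))
    rw [Finset.prod_insert ha, Finset.prod_insert ha, Finset.card_insert_of_notMem ha]
    have key : f a * ∏ i ∈ s, f i - g a * ∏ i ∈ s, g i
        = f a * (∏ i ∈ s, f i - ∏ i ∈ s, g i) + (f a - g a) * ∏ i ∈ s, g i := by ring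
    rw [key]
    have h1 : |f a * (∏ i ∈ s, f i - ∏ i ∈ s, g i)| ≤ M * (s.card * M ^ s.card * t) := by
      rw [abs_mul]
      exact mul_le_mul (hf a (mem_insert_self a s)) ihs (abs_nonneg _) h0
    have h2 : |(f a - g a) * ∏ i ∈ s, g i| ≤ t * M ^ s.card := by
      rw [abs_mul]
      exact mul_le_mul (hfg a (mem_insert_self a s)) hpg (abs_nonneg _) ht
    have hMc : M ^ s.card ≤ M ^ (s.card + 1) := pow_le_pow_right₀ hM (Nat.le_succ _)
    have hpow : M ^ (s.card + 1) = M * M ^ s.card := by ring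
    have hpn : (0:ℝ) ≤ M ^ s.card := pow_nonneg h0 _
    calc |f a * (∏ i ∈ s, f i - ∏ i ∈ s, g i) + (f a - g a) * ∏ i ∈ s, g i|
        ≤ M * (s.card * M ^ s.card * t) + t * M ^ s.card := (abs_add_le _ _).trans (add_le_add h1 h2)
      _ ≤ ((s.card : ℝ) + 1) * (M * M ^ s.card) * t := by
          nlinarith [mul_nonneg (mul_nonneg ht hpn) (sub_nonneg.mpr hM)]
      _ = ((s.card + 1 : ℕ) : ℝ) * M ^ (s.card + 1) * t := by
          push_cast [pow_succ]; ring

lemma abs_det_sub_det_le {n : ℕ} (A B : Matrix (Fin n) (Fin n) ℝ) (M t : ℝ)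
    (hM : 1 ≤ M) (ht : 0 ≤ t) (hA : ∀ i j, |A i j| ≤ M) (hB : ∀ i j, |B i j| ≤ M)
    (hAB : ∀ i j, |A i j - B i j| ≤ t) :
    |A.det - B.det| ≤ (n.factorial : ℝ) * (n * M ^ n * t) := by
  rw [Matrix.det_apply, Matrix.det_apply, ← Finset.sum_sub_distrib]
  refine (Finset.abs_sum_le_sum_abs _ _).trans ?_
  have hterm : ∀ σ ∈ (univ : Finset (Equiv.Perm (Fin n))),
      |Equiv.Perm.sign σ • ∏ i, A (σ i) i - Equiv.Perm.sign σ • ∏ i, B (σ i) i|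
        ≤ n * M ^ n * t := by
    intro σ _
    rw [← smul_sub]
    have hsign : |((Equiv.Perm.sign σ : ℤ) : ℝ)| = 1 := by
      rcases Int.units_eq_one_or (Equiv.Perm.sign σ) with h | h <;> simp [h]
    have : (Equiv.Perm.sign σ : ℤˣ) • (∏ i, A (σ i) i - ∏ i, B (σ i) i)
        = ((Equiv.Perm.sign σ : ℤ) : ℝ) * (∏ i, A (σ i) i - ∏ i, B (σ i) i) := by
      simp [Units.smul_def, zsmul_eq_mul]
    rw [this, abs_mul, hsign, one_mul]
    have := prod_sub_prod_bound (univ : Finset (Fin n)) (fun i => A (σ i) i)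
      (fun i => B (σ i) i) M t hM ht (fun i _ => hA _ _) (fun i _ => hB _ _)
      (fun i _ => hAB _ _)
    simpa [Finset.card_univ] using this
  calc ∑ σ : Equiv.Perm (Fin n),
        |Equiv.Perm.sign σ • ∏ i, A (σ i) i - Equiv.Perm.sign σ • ∏ i, B (σ i) i|
      ≤ (univ : Finset (Equiv.Perm (Fin n))).card • (n * M ^ n * t) :=
        Finset.sum_le_card_nsmul _ _ _ hterm
    _ = (n.factorial : ℝ) * (n * M ^ n * t) := by
        simp [Finset.card_univ, Fintype.card_perm, nsmul_eq_mul]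

lemma abs_det_le_frob {n : ℕ} (A : Matrix (Fin n) (Fin n) ℝ) :
    |A.det| ≤ (n.factorial : ℝ) * frob A ^ n := by
  rw [Matrix.det_apply]
  refine (Finset.abs_sum_le_sum_abs _ _).trans ?_
  have hterm : ∀ σ ∈ (univ : Finset (Equiv.Perm (Fin n))),
      |Equiv.Perm.sign σ • ∏ i, A (σ i) i| ≤ frob A ^ n := by
    intro σ _
    have : (Equiv.Perm.sign σ : ℤˣ) • (∏ i, A (σ i) i)
        = ((Equiv.Perm.sign σ : ℤ) : ℝ) * ∏ i, A (σ i) i := by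
      simp [Units.smul_def, zsmul_eq_mul]
    have hsign : |((Equiv.Perm.sign σ : ℤ) : ℝ)| = 1 := by
      rcases Int.units_eq_one_or (Equiv.Perm.sign σ) with h | h <;> simp [h]
    rw [this, abs_mul, hsign, one_mul, Finset.abs_prod]
    calc ∏ i, |A (σ i) i| ≤ ∏ _i : Fin n, frob A :=
          Finset.prod_le_prod (fun i _ => abs_nonneg _) (fun i _ => abs_entry_le_frob A _ _)
      _ = frob A ^ n := by simp [Finset.prod_const, Finset.card_univ]
  calc ∑ σ : Equiv.Perm (Fin n), |Equiv.Perm.sign σ • ∏ i, A (σ i) i|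
      ≤ (univ : Finset (Equiv.Perm (Fin n))).card • (frob A ^ n) :=
        Finset.sum_le_card_nsmul _ _ _ hterm
    _ = (n.factorial : ℝ) * frob A ^ n := by
        simp [Finset.card_univ, Fintype.card_perm, nsmul_eq_mul]

set_option maxHeartbeats 1000000 in
theorem stmt_11 (n : ℕ) (hn : 1 ≤ n) (lam Lam : ℝ) (hlam : 0 < lam) (hlL : lam ≤ Lam) :
    ∃ C₆ : ℝ, 0 < C₆ ∧
      ∀ A : Matrix (Fin n) (Fin n) ℝ, lam ≤ A.det → A.det ≤ Lam →
        |1 - A.det| ≤ C₆ * Kdist A * distSL A := by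
  have hfac : (0:ℝ) < n.factorial := by exact_mod_cast n.factorial_pos
  have hLam : 0 < Lam := lt_of_lt_of_le hlam hlL
  set p : ℝ := lam / n.factorial with hpdef
  have hp0 : 0 < p := div_pos hlam hfac
  set r0 : ℝ := p ^ ((n:ℝ)⁻¹) with hr0def
  have hr0 : 0 < r0 := Real.rpow_pos_of_pos hp0 _
  set C₁ : ℝ := (1 + Lam) * n.factorial / r0 with hC1def
  set C₂ : ℝ := n.factorial * n * (2 + 1/r0) ^ n * Lam with hC2def
  have hn0 : (0:ℝ) < n := by exact_mod_cast hn
  have hC1 : 0 < C₁ := by positivity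
  have hC2 : 0 < C₂ := by positivity
  refine ⟨C₁ + C₂, by positivity, ?_⟩
  intro A hdl hdL
  have hd : 0 < A.det := lt_of_lt_of_le hlam hdl
  set a : ℝ := frob A with hadef
  have ha0 : 0 ≤ a := frob_nonneg_s11 A
  have hdet : A.det ≤ (n.factorial : ℝ) * a ^ n := (le_abs_self _).trans (abs_det_le_frob A)
  have hpan : p ≤ a ^ n := by
    rw [hpdef, div_le_iff₀ hfac]
    calc lam ≤ A.det := hdl
      _ ≤ (n.factorial : ℝ) * a ^ n := hdet
      _ = a ^ n * n.factorial := by ring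
  have hra : r0 ≤ a := by
    have h := Real.rpow_le_rpow hp0.le hpan (inv_nonneg.mpr (Nat.cast_nonneg n))
    rwa [← Real.rpow_natCast a n, ← Real.rpow_mul ha0,
      mul_inv_cancel₀ (by exact_mod_cast hn0.ne' : (n:ℝ) ≠ 0), Real.rpow_one] at h
  have hKeq : Kdist A = a ^ n / A.det := rfl
  have hKlb : 1 / (n.factorial : ℝ) ≤ Kdist A := by
    rw [hKeq, div_le_div_iff₀ hfac hd]
    linarith
  have hK0 : 0 < Kdist A := lt_of_lt_of_le (by positivity) hKlb
  have hCK : 0 < (C₁ + C₂) * Kdist A := by positivity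
  rw [← div_le_iff₀' hCK]
  have hne : {r : ℝ | ∃ B : Matrix (Fin n) (Fin n) ℝ, B.det = 1 ∧ r = frob (A - B)}.Nonempty :=
    ⟨frob (A - 1), 1, Matrix.det_one, rfl⟩
  refine le_csInf hne ?_
  rintro r ⟨B, hB, rfl⟩
  rw [div_le_iff₀' hCK, mul_assoc]
  set t : ℝ := frob (A - B) with htdef
  have ht0 : 0 ≤ t := frob_nonneg_s11 _
  have hEA : ∀ i j, |A i j| ≤ a := abs_entry_le_frob A
  have hEAB : ∀ i j, |A i j - B i j| ≤ t := fun i j => by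
    simpa [Matrix.sub_apply] using abs_entry_le_frob (A - B) i j
  have hEB : ∀ i j, |B i j| ≤ a + t := fun i j => by
    calc |B i j| = |A i j - (A i j - B i j)| := by ring_nf
      _ ≤ |A i j| + |A i j - B i j| := abs_sub _ _
      _ ≤ a + t := add_le_add (hEA i j) (hEAB i j)
  rcases le_or_gt a t with hcase | hcase
  · -- t ≥ a
    have h1 : |1 - A.det| ≤ 1 + Lam := by
      rw [abs_le]; constructor <;> linarith
    have hrt : r0 ≤ t := le_trans hra hcase
    have hstep : (1/(n.factorial:ℝ)) * r0 ≤ Kdist A * t :=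
      mul_le_mul hKlb hrt hr0.le hK0.le
    have heq : C₁ * ((1/(n.factorial:ℝ)) * r0) = 1 + Lam := by
      rw [hC1def]; field_simp
    have h2 : C₁ * ((1/(n.factorial:ℝ)) * r0) ≤ C₁ * (Kdist A * t) :=
      mul_le_mul_of_nonneg_left hstep hC1.le
    have h3 : 0 ≤ C₂ * (Kdist A * t) := by positivity
    calc |1 - A.det| ≤ 1 + Lam := h1
      _ = C₁ * ((1/(n.factorial:ℝ)) * r0) := heq.symm
      _ ≤ C₁ * (Kdist A * t) := h2
      _ ≤ (C₁ + C₂) * (Kdist A * t) := by nlinarith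
  · -- t < a
    set M : ℝ := max 1 (a + t) with hMdef
    have hM1 : (1:ℝ) ≤ M := le_max_left _ _
    have hM0 : (0:ℝ) ≤ M := le_trans zero_le_one hM1
    have hdiff := abs_det_sub_det_le A B M t hM1 ht0
      (fun i j => (hEA i j).trans ((le_add_of_nonneg_right ht0).trans (le_max_right _ _)))
      (fun i j => (hEB i j).trans (le_max_right _ _)) hEAB
    rw [hB] at hdiff
    rw [abs_sub_comm] at hdiff
    have hir : 1 ≤ (1/r0) * a := by
      rw [one_div, ← div_eq_inv_mul, le_div_iff₀ hr0]; linarith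
    have hMle : M ≤ (2 + 1/r0) * a := by
      apply max_le
      · nlinarith
      · nlinarith
    have hMn : M ^ n ≤ ((2 + 1/r0) * a) ^ n := by
      gcongr
    have han : a ^ n = Kdist A * A.det := by
      rw [hKeq, div_mul_cancel₀ _ hd.ne']
    calc |1 - A.det| ≤ (n.factorial : ℝ) * (n * M ^ n * t) := hdiff
      _ ≤ (n.factorial : ℝ) * (n * ((2 + 1/r0) * a) ^ n * t) := by
          have : (n:ℝ) * M ^ n * t ≤ n * ((2 + 1/r0) * a) ^ n * t := by
            apply mul_le_mul_of_nonneg_right _ ht0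
            exact mul_le_mul_of_nonneg_left hMn (Nat.cast_nonneg n)
          exact mul_le_mul_of_nonneg_left this hfac.le
      _ = (n.factorial : ℝ) * n * (2 + 1/r0) ^ n * (Kdist A * A.det) * t := by
          rw [mul_pow, han]; ring
      _ ≤ (n.factorial : ℝ) * n * (2 + 1/r0) ^ n * (Kdist A * Lam) * t := by
          have hbase : (0:ℝ) ≤ (n.factorial : ℝ) * n * (2 + 1/r0) ^ n := by positivity
          have : Kdist A * A.det ≤ Kdist A * Lam :=
            mul_le_mul_of_nonneg_left hdL hK0.le
          exact mul_le_mul_of_nonneg_right (mul_le_mul_of_nonneg_left this hbase) ht0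
      _ = C₂ * (Kdist A * t) := by rw [hC2def]; ring
      _ ≤ (C₁ + C₂) * (Kdist A * t) := by nlinarith [mul_nonneg hK0.le ht0]
end
end
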